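/- Let Z = (Z₀,Z₁,Z₂,Z₃) ∈ C^4 satisfy ⟨Z,Z⟩ = 0, ⟨Z, conj(Z)⟩ = 2r² > 0 for some real r > 0, and Z₁ - iZ₂ ≠ 0, where ⟨·,·⟩ is the complex-bilinear extension of the Lorentzian form -x₀y₀ + x₁y₁ + x₂y₂ + x₃y₃. Define μ = (Z₁ - iZ₂)/2, a = (Z₀ + Z₃)/(Z₁ - iZ₂), b = (Z₀ - Z₃)/(Z₁ - iZ₂). Then a·conj(b) ≠ 1 and Z = μ·W(a,b) where W(a,b) = (a+b, 1+ab, i(1-ab), a-b). -/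

import Mathlib

/-- Complex-bilinear extension of the Lorentzian form to `ℂ⁴`. -/
noncomputable def B (x y : Fin 4 → ℂ) : ℂ :=
  -(x 0 * y 0) + x 1 * y 1 + x 2 * y 2 + x 3 * y 3

/-- The vector `W(a,b) = (a+b, 1+ab, i(1-ab), a-b)`. -/
noncomputable def W (a b : ℂ) : Fin 4 → ℂ :=
  ![a + b, 1 + a * b, Complex.I * (1 - a * b), a - b]

theorem stmt1 (Z : Fin 4 → ℂ) (r : ℝ) (hr : 0 < r)
    (h1 : B Z Z = 0)
    (h2 : B Z (fun i => starRingEnd ℂ (Z i)) = ((2 * r ^ 2 : ℝ) : ℂ))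
    (h3 : Z 1 - Complex.I * Z 2 ≠ 0) :
    ((Z 0 + Z 3) / (Z 1 - Complex.I * Z 2)) *
      starRingEnd ℂ ((Z 0 - Z 3) / (Z 1 - Complex.I * Z 2)) ≠ 1 ∧
    Z = fun i => ((Z 1 - Complex.I * Z 2) / 2) *
      W ((Z 0 + Z 3) / (Z 1 - Complex.I * Z 2))
        ((Z 0 - Z 3) / (Z 1 - Complex.I * Z 2)) i := by
  unfold B at h1 h2
  simp only at h1 h2
  set w : Fin 4 → ℂ := fun i => starRingEnd ℂ (Z i) with hw
  have key : (Z 1 - Complex.I * Z 2) * (Z 1 + Complex.I * Z 2) = (Z 0 + Z 3) * (Z 0 - Z 3) := by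
    linear_combination h1 - (Z 2 * Z 2) * Complex.I_sq
  have hcu : w 1 + Complex.I * w 2 ≠ 0 := by
    have : starRingEnd ℂ (Z 1 - Complex.I * Z 2) ≠ 0 := by rw [map_ne_zero]; exact h3
    simpa [hw, map_sub, map_mul, Complex.conj_I, sub_neg_eq_add] using this
  constructor
  · intro hab
    rw [map_div₀, map_sub, map_sub, map_mul, Complex.conj_I] at hab
    have hab' : (Z 0 + Z 3) * (w 0 - w 3) /
        ((Z 1 - Complex.I * Z 2) * (w 1 + Complex.I * w 2)) = 1 := by
      rw [div_mul_div_comm] at hab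
      convert hab using 3 <;> ring
    rw [div_eq_iff (mul_ne_zero h3 hcu), one_mul] at hab'
    have e : (Z 0 + Z 3) * (w 0 - w 3) = (Z 1 - Complex.I * Z 2) * (w 1 + Complex.I * w 2) := hab'
    have ce : (w 0 + w 3) * (Z 0 - Z 3) = (w 1 + Complex.I * w 2) * (Z 1 - Complex.I * Z 2) := by
      have := congrArg (starRingEnd ℂ) e
      simp [hw, map_mul, map_add, map_sub, Complex.conj_conj, Complex.conj_I] at this ⊢
      linear_combination this
    have ckey : (w 1 + Complex.I * w 2) * (w 1 - Complex.I * w 2) = (w 0 + w 3) * (w 0 - w 3) := by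
      have := congrArg (starRingEnd ℂ) key
      simp [hw, map_mul, map_add, map_sub, Complex.conj_conj, Complex.conj_I] at this ⊢
      linear_combination this
    set s : ℂ := (Z 1 - Complex.I * Z 2) * (w 1 + Complex.I * w 2) with hs
    have hsne : s ≠ 0 := mul_ne_zero h3 hcu
    have hts : (Z 1 + Complex.I * Z 2) * (w 1 - Complex.I * w 2) * s = s * s := by
      linear_combination ((w 1 + Complex.I * w 2) * (w 1 - Complex.I * w 2)) * key +
        ((Z 0 + Z 3) * (Z 0 - Z 3)) * ckey + ((w 0 + w 3) * (Z 0 - Z 3)) * e + s * ce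
    have ht : (Z 1 + Complex.I * Z 2) * (w 1 - Complex.I * w 2) = s :=
      mul_right_cancel₀ hsne hts
    have h0 : ((2 * r ^ 2 : ℝ) : ℂ) = 0 := by
      linear_combination -h2 - (1/2 : ℂ) * e - (1/2 : ℂ) * ce + (1/2 : ℂ) * ht +
        Z 2 * w 2 * Complex.I_sq
    rw [Complex.ofReal_eq_zero] at h0
    nlinarith [sq_nonneg r, hr]
  · funext i
    fin_cases i
    · show Z 0 = (Z 1 - Complex.I * Z 2) / 2 * W _ _ 0
      simp only [W, Matrix.cons_val_zero]
      field_simp; ring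
    · show Z 1 = (Z 1 - Complex.I * Z 2) / 2 * W _ _ 1
      simp only [W, Matrix.cons_val_one, Matrix.head_cons, Matrix.cons_val_zero]
      field_simp
      linear_combination key
    · show Z 2 = (Z 1 - Complex.I * Z 2) / 2 * W _ _ 2
      simp only [W, Matrix.cons_val_two, Matrix.tail_cons, Matrix.head_cons]
      have h3' : Z 1 - Z 2 * Complex.I ≠ 0 := by rwa [mul_comm]
      field_simp
      linear_combination (-(Complex.I)) * key +
        2 * Z 2 * (Z 1 - Complex.I * Z 2) * Complex.I_sq
    · show Z 3 = (Z 1 - Complex.I * Z 2) / 2 * W _ _ 3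
      simp only [W, Matrix.cons_val_three, Matrix.tail_cons, Matrix.head_cons]
      field_simp; ring
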